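/- Let G be a connected graph, R ⊆ V(G), and suppose T is a subtree of G containing R with Steiner vertex set S = V(T) \ R. If some vertex v ∈ S belongs to a clique K ⊆ V(T) such that all T-neighbors of v lie in K and |K| ≥ 2, then G[V(T) \ {v}] is connected and contains R; hence there is a Steiner tree for R with strictly fewer Steiner vertices. -/

import Mathlib

open SimpleGraph

variable {V : Type*}

def IsSteinerTree (G : SimpleGraph V) (R : Set V) (T : G.Subgraph) : Prop :=
  T.coe.IsTree ∧ R ⊆ T.verts

/-- A connected graph on a finite vertex type contains a spanning tree. -/
lemma exists_isTree_le_aux {W : Type*} [Fintype W] :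
    ∀ (n : ℕ) (H : SimpleGraph W), H.edgeSet.ncard ≤ n → H.Connected →
      ∃ H' ≤ H, H'.IsTree := by
  intro n
  induction n with
  | zero =>
    intro H hn hc
    refine ⟨H, le_rfl, hc, ?_⟩
    have hemp : H.edgeSet = ∅ := by
      rw [← Set.ncard_eq_zero H.edgeSet.toFinite]
      omega
    have : H = ⊥ := by rwa [← edgeSet_eq_empty]
    rw [this]
    exact isAcyclic_bot
  | succ n ih =>
    intro H hn hc
    by_cases ha : H.IsAcyclic
    · exact ⟨H, le_rfl, hc, ha⟩
    · rw [isAcyclic_iff_forall_edge_isBridge] at ha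
      push_neg at ha
      obtain ⟨e, he, hb⟩ := ha
      revert he hb
      refine Sym2.ind (fun u w he hb => ?_) e
      rw [isBridge_iff] at hb
      push_neg at hb
      have hr : (H \ fromEdgeSet {s(u, w)}).Reachable u w := hb
      set H₂ : SimpleGraph W := H \ fromEdgeSet {s(u, w)} with hH₂
      have hle : H₂ ≤ H := sdiff_le
      have hreach : ∀ {a b : W}, H.Walk a b → H₂.Reachable a b := by
        intro a b p
        induction p with
        | nil => exact Reachable.refl _
        | @cons x y z h q ihq =>
          refine Reachable.trans ?_ ihq
          by_cases hxy : s(x, y) = s(u, w)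
          · rw [Sym2.eq_iff] at hxy
            rcases hxy with ⟨rfl, rfl⟩ | ⟨rfl, rfl⟩
            · exact hr
            · exact hr.symm
          · exact Adj.reachable ⟨h, by simp [hxy]⟩
      have hc₂ : H₂.Connected := by
        rw [connected_iff_exists_forall_reachable]
        obtain ⟨x⟩ := hc.nonempty
        exact ⟨x, fun y => by obtain ⟨p⟩ := hc.preconnected x y; exact hreach p⟩
      have hcard : H₂.edgeSet.ncard ≤ n := by
        have hss : H₂.edgeSet ⊂ H.edgeSet := by
          constructor
          · exact edgeSet_mono hle
          · intro hsub
            have : s(u, w) ∈ H₂.edgeSet := hsub he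
            rw [hH₂, edgeSet_sdiff] at this
            exact this.2 (by simp [edgeSet_fromEdgeSet, (H.mem_edgeSet.mp he).ne])
        have := Set.ncard_lt_ncard hss H.edgeSet.toFinite
        omega
      obtain ⟨H', hle', ht⟩ := ih H₂ hcard hc₂
      exact ⟨H', hle'.trans hle, ht⟩

lemma exists_isTree_le {W : Type*} [Fintype W] (H : SimpleGraph W) (hc : H.Connected) :
    ∃ H' ≤ H, H'.IsTree :=
  exists_isTree_le_aux H.edgeSet.ncard H le_rfl hc

/-- If a Steiner tree `T` for `R` has a Steiner vertex `v` lying in a clique `K ⊆ V(T)` of size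
at least 2 such that all `T`-neighbours of `v` lie in `K`, then `G[V(T) \ {v}]` is connected and
contains `R`; hence there is a Steiner tree for `R` with strictly fewer Steiner vertices. -/
theorem stmt14 [Fintype V] (G : SimpleGraph V) (R : Set V) (T : G.Subgraph)
    (hT : IsSteinerTree G R T) (v : V) (hv : v ∈ T.verts) (hvR : v ∉ R)
    (K : Set V) (hK : G.IsClique K) (hKT : K ⊆ T.verts) (hvK : v ∈ K) (hK2 : 2 ≤ K.ncard)
    (hKfin : K.Finite)
    (hnb : ∀ w, T.Adj v w → w ∈ K \ {v}) :
    (G.induce (T.verts \ {v})).Connected ∧ R ⊆ T.verts \ {v} ∧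
      ∃ T' : G.Subgraph, IsSteinerTree G R T' ∧ (T'.verts \ R).ncard < (T.verts \ R).ncard := by
  classical
  set s : Set V := T.verts \ {v} with hs
  -- pick a clique vertex different from v
  obtain ⟨k, hkK, hkv⟩ := Set.exists_ne_of_one_lt_ncard (show 1 < K.ncard by omega) v
  have hks : k ∈ s := ⟨hKT hkK, hkv⟩
  -- walks in T avoiding v transfer to the induced graph
  have step : ∀ (a b : T.verts) (q : T.coe.Walk a b),
      (∀ x ∈ q.support, (x : V) ≠ v) → ∀ (ha : (a : V) ∈ s) (hb : (b : V) ∈ s),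
        (G.induce s).Reachable ⟨a, ha⟩ ⟨b, hb⟩ := by
    intro a b q
    induction q with
    | nil => intro _ ha hb; exact Reachable.refl _
    | @cons x y z h q ihq =>
      intro hsup hx hz
      have hy : (y : V) ∈ s :=
        ⟨y.2, hsup y (by simp [Walk.support_cons, Walk.start_mem_support])⟩
      have hadj : (G.induce s).Adj ⟨x, hx⟩ ⟨y, hy⟩ := by
        simpa using (T.coe_adj_sub x y h)
      exact hadj.reachable.trans
        (ihq (fun z hz => hsup z (by simp [Walk.support_cons, hz])) hy hz)
  -- every vertex of s reaches k in the induced graph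
  have key : ∀ (b : T.verts) (p : T.coe.Walk ⟨v, hv⟩ b), p.IsPath → ∀ (hb : (b : V) ∈ s),
      (G.induce s).Reachable ⟨b, hb⟩ ⟨k, hks⟩ := by
    intro b p
    cases p with
    | nil =>
      intro _ hb
      exact absurd rfl hb.2
    | @cons _ c _ h q =>
      intro hp hb
      rw [Walk.cons_isPath_iff] at hp
      obtain ⟨hq, hvq⟩ := hp
      have hcK : (c : V) ∈ K \ {v} := hnb c (by simpa using h)
      have hcs : (c : V) ∈ s := ⟨c.2, hcK.2⟩
      have hsup : ∀ x ∈ q.support, (x : V) ≠ v := by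
        intro x hx hxv
        exact hvq (by rwa [show x = ⟨v, hv⟩ from Subtype.ext hxv] at hx)
      have r1 : (G.induce s).Reachable ⟨c, hcs⟩ ⟨b, hb⟩ := step c b q hsup hcs hb
      have r2 : (G.induce s).Reachable ⟨c, hcs⟩ ⟨k, hks⟩ := by
        by_cases hck : (c : V) = k
        · exact (show (⟨(c : V), hcs⟩ : ↥s) = ⟨k, hks⟩ from Subtype.ext hck) ▸ Reachable.refl _
        · exact Adj.reachable (by simpa using hK hcK.1 hkK hck)
      exact r1.symm.trans r2
  have reachK : ∀ (u : V) (hu : u ∈ s), (G.induce s).Reachable ⟨u, hu⟩ ⟨k, hks⟩ := by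
    intro u hu
    obtain ⟨w⟩ := hT.1.isConnected.preconnected ⟨v, hv⟩ ⟨u, hu.1⟩
    exact key ⟨u, hu.1⟩ w.toPath w.toPath.2 hu
  have hconn : (G.induce s).Connected := by
    rw [connected_iff_exists_forall_reachable]
    exact ⟨⟨k, hks⟩, fun u => (reachK u.1 u.2).symm⟩
  have hRs : R ⊆ s := fun r hr => ⟨hT.2 hr, fun h => hvR (h ▸ hr)⟩
  refine ⟨hconn, hRs, ?_⟩
  -- spanning tree of the induced graph
  have : Fintype ↥s := Set.Finite.fintype (Set.toFinite s)
  obtain ⟨H', hle, htree⟩ := exists_isTree_le (G.induce s) hconn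
  refine ⟨⟨s, fun x y => ∃ (hx : x ∈ s) (hy : y ∈ s), H'.Adj ⟨x, hx⟩ ⟨y, hy⟩, ?_, ?_, ?_⟩, ⟨?_, ?_⟩, ?_⟩
  · rintro x y ⟨hx, hy, hxy⟩
    exact hle hxy
  · rintro x y ⟨hx, hy, hxy⟩
    exact hx
  · refine ⟨?_⟩
    rintro x y ⟨hx, hy, hxy⟩
    exact ⟨hy, hx, hxy.symm⟩
  · -- coe is a tree
    have hcoe : (SimpleGraph.Subgraph.coe
        ⟨s, fun x y => ∃ (hx : x ∈ s) (hy : y ∈ s), H'.Adj ⟨x, hx⟩ ⟨y, hy⟩,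
          fun hxy => hle hxy.2.2, fun {x y} hxy => hxy.1,
          ⟨by rintro x y ⟨hx, hy, hxy⟩; exact ⟨hy, hx, hxy.symm⟩⟩⟩ : SimpleGraph ↥s) = H' := by
      ext a b
      constructor
      · rintro ⟨hx, hy, hxy⟩
        convert hxy <;> exact Subtype.ext rfl
      · intro hab
        exact ⟨a.2, b.2, by convert hab <;> exact Subtype.ext rfl⟩
    rw [show (⟨s, fun x y => ∃ (hx : x ∈ s) (hy : y ∈ s), H'.Adj ⟨x, hx⟩ ⟨y, hy⟩,
          fun hxy => hle hxy.2.2, fun {x y} hxy => hxy.1,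
          ⟨by rintro x y ⟨hx, hy, hxy⟩; exact ⟨hy, hx, hxy.symm⟩⟩⟩ : G.Subgraph).coe = H' from hcoe]
    exact htree
  · exact hRs
  · -- strictly fewer Steiner vertices
    apply Set.ncard_lt_ncard
    · constructor
      · intro x hx
        exact ⟨hx.1.1, hx.2⟩
      · intro hsub
        have : v ∈ s \ R := hsub ⟨hv, hvR⟩
        exact this.1.2 rfl
    · exact Set.toFinite _
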